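/- arXiv:1602.07985 — 4 statements merged into one kernel-verified Lean document; each statement's English description precedes it below -/
import Mathlib

section
/- For 0 < x < y < 1 and any two types σ, σ', under perfect grading the ratio (Pr[x ▷ σ]·Pr[y ▷ σ']) / (Pr[x ▷ σ']·Pr[y ▷ σ]) equals ((y(1−x))/(x(1−y)))^{B(σ)−B(σ')}. -/
/-- Probability, under perfect grading, that a paper with ground-truth rank
`x ∈ (0,1)` receives type `σ`:
`Pr[x ▷ σ] = N(σ) (∏ᵢ C(k−1, σᵢ−1)) x^{k²−B(σ)}(1−x)^{B(σ)−k}`. -/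
noncomputable def perfectProb (k : ℕ) (σ : Fin k → ℕ) (x : ℝ) : ℝ :=
  (k.factorial : ℝ) /
      (∏ i ∈ Finset.Icc 1 k, ((Finset.univ.filter fun m => σ m = i).card.factorial : ℝ)) *
    (∏ i, ((k - 1).choose (σ i - 1) : ℝ)) *
    x ^ (k ^ 2 - (k ^ 2 + k - ∑ i, σ i)) * (1 - x) ^ ((k ^ 2 + k - ∑ i, σ i) - k)

/-- The Borda score `B(σ) = k² + k − Σᵢ σᵢ` of a type `σ`. -/
def bordaScore (k : ℕ) (σ : Fin k → ℕ) : ℤ :=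
  (k : ℤ) ^ 2 + k - ∑ i, (σ i : ℤ)

/-- For `0 < x < y < 1` and any two types `σ, σ'`, under perfect grading
`(Pr[x ▷ σ]·Pr[y ▷ σ']) / (Pr[x ▷ σ']·Pr[y ▷ σ]) = ((y(1−x))/(x(1−y)))^{B(σ)−B(σ')}`. -/
theorem stmt_5 (k : ℕ) (σ σ' : Fin k → ℕ)
    (hmono : Monotone σ) (hmono' : Monotone σ')
    (hσ : ∀ i, σ i ∈ Finset.Icc 1 k) (hσ' : ∀ i, σ' i ∈ Finset.Icc 1 k)
    (x y : ℝ) (hx : 0 < x) (hxy : x < y) (hy : y < 1)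
    (hden : perfectProb k σ' x * perfectProb k σ y ≠ 0) :
    perfectProb k σ x * perfectProb k σ' y / (perfectProb k σ' x * perfectProb k σ y) =
      (y * (1 - x) / (x * (1 - y))) ^ (bordaScore k σ - bordaScore k σ') := by
  obtain ⟨h2, h3⟩ := mul_ne_zero_iff.mp hden
  have hx0 : x ≠ 0 := ne_of_gt hx
  have hy0 : y ≠ 0 := ne_of_gt (lt_trans hx hxy)
  have hx1 : (1:ℝ) - x ≠ 0 := ne_of_gt (by linarith)
  have hy1 : (1:ℝ) - y ≠ 0 := ne_of_gt (by linarith)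
  set a := ∑ i, σ i with ha_def
  set a' := ∑ i, σ' i with ha'_def
  have hka : k ≤ a := by
    calc k = ∑ _i : Fin k, 1 := by simp
    _ ≤ a := Finset.sum_le_sum fun i _ => (Finset.mem_Icc.mp (hσ i)).1
  have hak : a ≤ k ^ 2 := by
    calc a ≤ ∑ _i : Fin k, k := Finset.sum_le_sum fun i _ => (Finset.mem_Icc.mp (hσ i)).2
    _ = k ^ 2 := by simp [sq]
  have hka' : k ≤ a' := by
    calc k = ∑ _i : Fin k, 1 := by simp
    _ ≤ a' := Finset.sum_le_sum fun i _ => (Finset.mem_Icc.mp (hσ' i)).1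
  have hak' : a' ≤ k ^ 2 := by
    calc a' ≤ ∑ _i : Fin k, k := Finset.sum_le_sum fun i _ => (Finset.mem_Icc.mp (hσ' i)).2
    _ = k ^ 2 := by simp [sq]
  have hB : bordaScore k σ - bordaScore k σ' = (a' : ℤ) - a := by
    simp only [bordaScore, ha_def, ha'_def, Nat.cast_sum]
    ring
  set C := (k.factorial : ℝ) /
      (∏ i ∈ Finset.Icc 1 k, ((Finset.univ.filter fun m => σ m = i).card.factorial : ℝ)) *
    (∏ i, ((k - 1).choose (σ i - 1) : ℝ)) with hC_def
  set C' := (k.factorial : ℝ) /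
      (∏ i ∈ Finset.Icc 1 k, ((Finset.univ.filter fun m => σ' m = i).card.factorial : ℝ)) *
    (∏ i, ((k - 1).choose (σ' i - 1) : ℝ)) with hC'_def
  have hP : ∀ z : ℝ, z ≠ 0 → (1 - z) ≠ 0 →
      perfectProb k σ z = C * z ^ ((a:ℤ) - k) * (1 - z) ^ ((k:ℤ)^2 - a) := by
    intro z hz hz1
    unfold perfectProb
    rw [show k ^ 2 - (k ^ 2 + k - a) = a - k by omega,
        show (k ^ 2 + k - a) - k = k ^ 2 - a by omega,
        ← zpow_natCast z (a - k), ← zpow_natCast (1 - z) (k ^ 2 - a),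
        show ((a - k : ℕ) : ℤ) = (a : ℤ) - k by omega,
        show ((k ^ 2 - a : ℕ) : ℤ) = (k : ℤ) ^ 2 - a by push_cast [Nat.cast_sub hak]; ring]
  have hP' : ∀ z : ℝ, z ≠ 0 → (1 - z) ≠ 0 →
      perfectProb k σ' z = C' * z ^ ((a':ℤ) - k) * (1 - z) ^ ((k:ℤ)^2 - a') := by
    intro z hz hz1
    unfold perfectProb
    rw [show k ^ 2 - (k ^ 2 + k - a') = a' - k by omega,
        show (k ^ 2 + k - a') - k = k ^ 2 - a' by omega,
        ← zpow_natCast z (a' - k), ← zpow_natCast (1 - z) (k ^ 2 - a'),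
        show ((a' - k : ℕ) : ℤ) = (a' : ℤ) - k by omega,
        show ((k ^ 2 - a' : ℕ) : ℤ) = (k : ℤ) ^ 2 - a' by push_cast [Nat.cast_sub hak']; ring]
  have hC'ne : C' ≠ 0 := by
    intro h
    apply h2
    rw [hP' x hx0 hx1, h]
    ring
  have hCne : C ≠ 0 := by
    intro h
    apply h3
    rw [hP y hy0 hy1, h]
    ring
  rw [hP x hx0 hx1, hP' y hy0 hy1, hP' x hx0 hx1, hP y hy0 hy1, hB]
  rw [div_zpow, mul_zpow, mul_zpow]
  rw [zpow_sub₀ hx0, zpow_sub₀ hy0, zpow_sub₀ hx1, zpow_sub₀ hy1,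
      zpow_sub₀ hx0, zpow_sub₀ hy0, zpow_sub₀ hx1, zpow_sub₀ hy1,
      zpow_sub₀ hx0, zpow_sub₀ hy0, zpow_sub₀ hx1, zpow_sub₀ hy1]
  have nz : ∀ (z : ℝ), z ≠ 0 → ∀ n : ℤ, z ^ n ≠ 0 := fun z hz n => zpow_ne_zero n hz
  field_simp
end

section
/- Under perfect grading, for any two types σ, σ' and any 0 < x < y < 1, the quantity Pr[x ▷ σ]·Pr[y ▷ σ'] − Pr[x ▷ σ']·Pr[y ▷ σ] is positive, zero, or negative according as B(σ) − B(σ') is positive, zero, or negative. -/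
lemma key_lt (x y : ℝ) (hx : 0 < x) (hxy : x < y) (hy : y < 1)
    (a b' d : ℕ) (hd : 0 < d) :
    x ^ (a + d) * (1 - x) ^ b' * (y ^ a * (1 - y) ^ (b' + d)) <
      x ^ a * (1 - x) ^ (b' + d) * (y ^ (a + d) * (1 - y) ^ b') := by
  have hx1 : x < 1 := hxy.trans hy
  have h1x : 0 < 1 - x := by linarith
  have h1y : 0 < 1 - y := by linarith
  have hy0 : 0 < y := hx.trans hxy
  have hkey : (x * (1 - y)) ^ d < ((1 - x) * y) ^ d :=
    pow_lt_pow_left₀ (by nlinarith) (by positivity) hd.ne'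
  have hP : 0 < x ^ a * (1 - x) ^ b' * (y ^ a * (1 - y) ^ b') := by positivity
  have e1 : x ^ (a + d) * (1 - x) ^ b' * (y ^ a * (1 - y) ^ (b' + d)) =
      (x ^ a * (1 - x) ^ b' * (y ^ a * (1 - y) ^ b')) * (x * (1 - y)) ^ d := by
    rw [pow_add, pow_add, mul_pow]; ring
  have e2 : x ^ a * (1 - x) ^ (b' + d) * (y ^ (a + d) * (1 - y) ^ b') =
      (x ^ a * (1 - x) ^ b' * (y ^ a * (1 - y) ^ b')) * ((1 - x) * y) ^ d := by
    rw [pow_add, pow_add, mul_pow]; ring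
  rw [e1, e2]
  exact mul_lt_mul_of_pos_left hkey hP

lemma const_pos (k : ℕ) (σ : Fin k → ℕ) (hσ : ∀ i, σ i ∈ Finset.Icc 1 k) :
    0 < (k.factorial : ℝ) /
        (∏ i ∈ Finset.Icc 1 k, ((Finset.univ.filter fun m => σ m = i).card.factorial : ℝ)) *
      (∏ i, ((k - 1).choose (σ i - 1) : ℝ)) := by
  apply mul_pos
  · apply div_pos
    · exact_mod_cast Nat.factorial_pos k
    · apply Finset.prod_pos
      intro i _
      exact_mod_cast Nat.factorial_pos _
  · apply Finset.prod_pos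
    intro i _
    have h := hσ i
    simp only [Finset.mem_Icc] at h
    exact_mod_cast Nat.choose_pos (by omega)

/-- Under perfect grading, for any two types `σ, σ'` and any `0 < x < y < 1`,
the quantity `Pr[x ▷ σ]·Pr[y ▷ σ'] − Pr[x ▷ σ']·Pr[y ▷ σ]` is positive, zero,
or negative according as `B(σ) − B(σ')` is positive, zero, or negative. -/
theorem stmt_7 (k : ℕ) (σ σ' : Fin k → ℕ)
    (hmono : Monotone σ) (hmono' : Monotone σ')
    (hσ : ∀ i, σ i ∈ Finset.Icc 1 k) (hσ' : ∀ i, σ' i ∈ Finset.Icc 1 k)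
    (x y : ℝ) (hx : 0 < x) (hxy : x < y) (hy : y < 1) :
    Real.sign
        (perfectProb k σ x * perfectProb k σ' y - perfectProb k σ' x * perfectProb k σ y) =
      (Int.sign (bordaScore k σ - bordaScore k σ') : ℝ) := by
  have hx1 : x < 1 := hxy.trans hy
  have h1x : 0 < 1 - x := by linarith
  have h1y : 0 < 1 - y := by linarith
  have hy0 : 0 < y := hx.trans hxy
  set S : ℕ := ∑ i, σ i with hS
  set S' : ℕ := ∑ i, σ' i with hS'
  have hkk : k ≤ k ^ 2 := by nlinarith
  have sum_bounds : ∀ (τ : Fin k → ℕ), (∀ i, τ i ∈ Finset.Icc 1 k) →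
      k ≤ ∑ i, τ i ∧ ∑ i, τ i ≤ k ^ 2 := by
    intro τ hτ
    constructor
    · calc k = ∑ _i : Fin k, 1 := by simp
        _ ≤ ∑ i, τ i := Finset.sum_le_sum fun i _ => by
            have := hτ i; simp only [Finset.mem_Icc] at this; exact this.1
    · calc ∑ i, τ i ≤ ∑ _i : Fin k, k := Finset.sum_le_sum fun i _ => by
            have := hτ i; simp only [Finset.mem_Icc] at this; exact this.2
        _ = k ^ 2 := by simp [sq]
  obtain ⟨hS1, hS2⟩ := sum_bounds σ hσ
  obtain ⟨hS1', hS2'⟩ := sum_bounds σ' hσ'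
  rw [← hS] at hS1 hS2
  rw [← hS'] at hS1' hS2'
  have eσ1 : k ^ 2 - (k ^ 2 + k - S) = S - k := by omega
  have eσ2 : (k ^ 2 + k - S) - k = k ^ 2 - S := by omega
  have eσ1' : k ^ 2 - (k ^ 2 + k - S') = S' - k := by omega
  have eσ2' : (k ^ 2 + k - S') - k = k ^ 2 - S' := by omega
  set C : ℝ := (k.factorial : ℝ) /
      (∏ i ∈ Finset.Icc 1 k, ((Finset.univ.filter fun m => σ m = i).card.factorial : ℝ)) *
    (∏ i, ((k - 1).choose (σ i - 1) : ℝ)) with hC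
  set C' : ℝ := (k.factorial : ℝ) /
      (∏ i ∈ Finset.Icc 1 k, ((Finset.univ.filter fun m => σ' m = i).card.factorial : ℝ)) *
    (∏ i, ((k - 1).choose (σ' i - 1) : ℝ)) with hC'
  have hCpos : 0 < C := const_pos k σ hσ
  have hCpos' : 0 < C' := const_pos k σ' hσ'
  have hprob : ∀ z : ℝ, perfectProb k σ z = C * (z ^ (S - k) * (1 - z) ^ (k ^ 2 - S)) := by
    intro z
    rw [perfectProb, ← hS, eσ1, eσ2, hC]; ring
  have hprob' : ∀ z : ℝ, perfectProb k σ' z = C' * (z ^ (S' - k) * (1 - z) ^ (k ^ 2 - S')) := by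
    intro z
    rw [perfectProb, ← hS', eσ1', eσ2', hC']; ring
  have hborda : bordaScore k σ - bordaScore k σ' = (S' : ℤ) - S := by
    simp only [bordaScore, hS, hS', Nat.cast_sum]
    ring
  rw [hborda]
  rcases lt_trichotomy S S' with h | h | h
  · -- S < S' : difference is positive, sign is 1
    have hd : perfectProb k σ x * perfectProb k σ' y - perfectProb k σ' x * perfectProb k σ y
        = C * C' * (x ^ (S - k) * (1 - x) ^ (k ^ 2 - S) * (y ^ (S' - k) * (1 - y) ^ (k ^ 2 - S'))
          - x ^ (S' - k) * (1 - x) ^ (k ^ 2 - S') * (y ^ (S - k) * (1 - y) ^ (k ^ 2 - S))) := by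
      rw [hprob x, hprob' y, hprob' x, hprob y]; ring
    have hlt : x ^ (S' - k) * (1 - x) ^ (k ^ 2 - S') * (y ^ (S - k) * (1 - y) ^ (k ^ 2 - S))
        < x ^ (S - k) * (1 - x) ^ (k ^ 2 - S) * (y ^ (S' - k) * (1 - y) ^ (k ^ 2 - S')) := by
      have e1 : S' - k = (S - k) + (S' - S) := by omega
      have e2 : k ^ 2 - S = (k ^ 2 - S') + (S' - S) := by omega
      rw [e1, e2]
      exact key_lt x y hx hxy hy (S - k) (k ^ 2 - S') (S' - S) (by omega)
    rw [hd, Real.sign_of_pos (mul_pos (mul_pos hCpos hCpos') (sub_pos.mpr hlt))]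
    rw [Int.sign_eq_one_iff_pos.mpr (by omega)]
    norm_num
  · -- S = S' : difference is zero
    have hd : perfectProb k σ x * perfectProb k σ' y - perfectProb k σ' x * perfectProb k σ y
        = 0 := by
      rw [hprob x, hprob' y, hprob' x, hprob y, h]; ring
    rw [hd, Real.sign_zero, h]
    norm_num
  · -- S > S' : difference is negative
    have hd : perfectProb k σ x * perfectProb k σ' y - perfectProb k σ' x * perfectProb k σ y
        = C * C' * (x ^ (S - k) * (1 - x) ^ (k ^ 2 - S) * (y ^ (S' - k) * (1 - y) ^ (k ^ 2 - S'))
          - x ^ (S' - k) * (1 - x) ^ (k ^ 2 - S') * (y ^ (S - k) * (1 - y) ^ (k ^ 2 - S))) := by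
      rw [hprob x, hprob' y, hprob' x, hprob y]; ring
    have hlt : x ^ (S - k) * (1 - x) ^ (k ^ 2 - S) * (y ^ (S' - k) * (1 - y) ^ (k ^ 2 - S'))
        < x ^ (S' - k) * (1 - x) ^ (k ^ 2 - S') * (y ^ (S - k) * (1 - y) ^ (k ^ 2 - S)) := by
      have e1 : S - k = (S' - k) + (S - S') := by omega
      have e2 : k ^ 2 - S' = (k ^ 2 - S) + (S - S') := by omega
      rw [e1, e2]
      exact key_lt x y hx hxy hy (S' - k) (k ^ 2 - S) (S - S') (by omega)
    have hneg : perfectProb k σ x * perfectProb k σ' y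
        - perfectProb k σ' x * perfectProb k σ y < 0 := by
      rw [hd]
      apply mul_neg_of_pos_of_neg (by positivity)
      linarith
    rw [Real.sign_of_neg hneg]
    rw [Int.sign_eq_neg_one_iff_neg.mpr (by omega)]
    norm_num
end

section
/- Under perfect grading, for any two types σ, σ' with B(σ) > B(σ') and any measurable nonnegative function f: [0,1]² → [0,1] that is strictly positive on a set of positive measure within {(x,y) : 0 < x < y < 1}, the weight difference W(σ,σ') − W(σ',σ) = ∫₀¹∫ₓ¹ f(x,y)(Pr[x ▷ σ]Pr[y ▷ σ'] − Pr[x ▷ σ']Pr[y ▷ σ]) dy dx is strictly positive. -/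
open MeasureTheory intervalIntegral

private lemma pp_sum_bounds (k : ℕ) (τ : Fin k → ℕ) (hτ : ∀ i, τ i ∈ Finset.Icc 1 k) :
    k ≤ ∑ i, τ i ∧ ∑ i, τ i ≤ k ^ 2 := by
  constructor
  · calc k = ∑ _i : Fin k, 1 := by simp
      _ ≤ ∑ i, τ i := Finset.sum_le_sum fun i _ => (Finset.mem_Icc.mp (hτ i)).1
  · calc ∑ i, τ i ≤ ∑ _i : Fin k, k :=
        Finset.sum_le_sum fun i _ => (Finset.mem_Icc.mp (hτ i)).2
      _ = k ^ 2 := by simp [sq]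

private lemma pp_repr (k : ℕ) (τ : Fin k → ℕ) (hτ : ∀ i, τ i ∈ Finset.Icc 1 k) :
    ∃ C : ℝ, 0 < C ∧
      ∀ x : ℝ, perfectProb k τ x = C * x ^ (∑ i, τ i - k) * (1 - x) ^ (k ^ 2 - ∑ i, τ i) := by
  obtain ⟨hs1, hs2⟩ := pp_sum_bounds k τ hτ
  refine ⟨(k.factorial : ℝ) /
      (∏ i ∈ Finset.Icc 1 k, ((Finset.univ.filter fun m => τ m = i).card.factorial : ℝ)) *
    (∏ i, ((k - 1).choose (τ i - 1) : ℝ)), ?_, ?_⟩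
  · apply mul_pos
    · exact div_pos (Nat.cast_pos.2 k.factorial_pos)
        (Finset.prod_pos fun i _ => Nat.cast_pos.2 (Nat.factorial_pos _))
    · refine Finset.prod_pos fun i _ => Nat.cast_pos.2 (Nat.choose_pos ?_)
      have := Finset.mem_Icc.mp (hτ i); omega
  · intro x
    have e1 : k ^ 2 - (k ^ 2 + k - ∑ i, τ i) = ∑ i, τ i - k := by omega
    have e2 : (k ^ 2 + k - ∑ i, τ i) - k = k ^ 2 - ∑ i, τ i := by omega
    rw [perfectProb, e1, e2]

/-- Under perfect grading, for types `σ, σ'` with `B(σ) > B(σ')` and any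
measurable `f : [0,1]² → [0,1]` strictly positive on a set of positive measure
within the open triangle `{(x,y) : 0 < x < y < 1}`, the weight difference
`W(σ,σ') − W(σ',σ) = ∫₀¹∫ₓ¹ f(x,y)(Pr[x ▷ σ]Pr[y ▷ σ'] − Pr[x ▷ σ']Pr[y ▷ σ]) dy dx`
is strictly positive. -/
theorem stmt_8 (k : ℕ) (σ σ' : Fin k → ℕ)
    (hmono : Monotone σ) (hmono' : Monotone σ')
    (hσ : ∀ i, σ i ∈ Finset.Icc 1 k) (hσ' : ∀ i, σ' i ∈ Finset.Icc 1 k)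
    (hB : bordaScore k σ' < bordaScore k σ)
    (f : ℝ → ℝ → ℝ)
    (hfmeas : Measurable fun p : ℝ × ℝ => f p.1 p.2)
    (hf01 : ∀ x y, 0 ≤ f x y ∧ f x y ≤ 1)
    (hfpos : 0 < volume {p : ℝ × ℝ | 0 < p.1 ∧ p.1 < p.2 ∧ p.2 < 1 ∧ 0 < f p.1 p.2}) :
    0 < ∫ x in (0 : ℝ)..1, ∫ y in x..1,
        f x y * (perfectProb k σ x * perfectProb k σ' y -
          perfectProb k σ' x * perfectProb k σ y) := by
  -- notation
  obtain ⟨hs1, hs2⟩ := pp_sum_bounds k σ hσ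
  obtain ⟨hs1', hs2'⟩ := pp_sum_bounds k σ' hσ'
  obtain ⟨C, hC, hrep⟩ := pp_repr k σ hσ
  obtain ⟨C', hC', hrep'⟩ := pp_repr k σ' hσ'
  set s : ℕ := ∑ i, σ i with hs_def
  set s' : ℕ := ∑ i, σ' i with hs'_def
  have hss' : s < s' := by
    have : ((k : ℤ) ^ 2 + k - ∑ i, (σ' i : ℤ)) < (k : ℤ) ^ 2 + k - ∑ i, (σ i : ℤ) := hB
    have h2 : (∑ i, (σ i : ℤ)) < ∑ i, (σ' i : ℤ) := by linarith
    have e : (∑ i, (σ i : ℤ)) = (s : ℤ) := by push_cast [hs_def]; rfl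
    have e' : (∑ i, (σ' i : ℤ)) = (s' : ℤ) := by push_cast [hs'_def]; rfl
    rw [e, e'] at h2; exact_mod_cast h2
  set g : ℝ → ℝ → ℝ := fun x y =>
    f x y * (perfectProb k σ x * perfectProb k σ' y -
      perfectProb k σ' x * perfectProb k σ y) with hg_def
  set T : Set (ℝ × ℝ) := {p : ℝ × ℝ | 0 < p.1 ∧ p.1 < p.2 ∧ p.2 < 1} with hT_def
  have hTmeas : MeasurableSet T := by
    apply MeasurableSet.inter (measurableSet_lt measurable_const measurable_fst)
    exact MeasurableSet.inter (measurableSet_lt measurable_fst measurable_snd)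
      (measurableSet_lt measurable_snd measurable_const)
  -- key pointwise positivity of the probability difference
  have key : ∀ x y : ℝ, 0 < x → x < y → y < 1 →
      0 < perfectProb k σ x * perfectProb k σ' y - perfectProb k σ' x * perfectProb k σ y := by
    intro x y hx hxy hy1
    have hx1 : x < 1 := hxy.trans hy1
    have hy : 0 < y := hx.trans hxy
    have h1x : 0 < 1 - x := by linarith
    have h1y : 0 < 1 - y := by linarith
    rw [hrep, hrep, hrep', hrep']
    set d : ℕ := s' - s with hd_def
    have hd0 : d ≠ 0 := by omega
    have ea : s' - k = (s - k) + d := by omega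
    have eb : k ^ 2 - s = (k ^ 2 - s') + d := by omega
    have ident :
        C * x ^ (s - k) * (1 - x) ^ (k ^ 2 - s) *
            (C' * y ^ (s' - k) * (1 - y) ^ (k ^ 2 - s')) -
          C' * x ^ (s' - k) * (1 - x) ^ (k ^ 2 - s') *
            (C * y ^ (s - k) * (1 - y) ^ (k ^ 2 - s)) =
        C * C' * (x ^ (s - k) * (1 - x) ^ (k ^ 2 - s') * y ^ (s - k) * (1 - y) ^ (k ^ 2 - s')) *
          ((y * (1 - x)) ^ d - (x * (1 - y)) ^ d) := by
      rw [ea, eb, pow_add, pow_add, mul_pow, mul_pow]; ring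
    rw [ident]
    apply mul_pos
    · apply mul_pos (mul_pos hC hC')
      positivity
    · have hlt : x * (1 - y) < y * (1 - x) := by nlinarith
      have hnn : 0 ≤ x * (1 - y) := mul_nonneg hx.le h1y.le
      exact sub_pos.2 (pow_lt_pow_left₀ hlt hnn hd0)
  -- bounds for the probabilities on [0,1]
  have bound : ∀ (τ : Fin k → ℕ) (D : ℝ), 0 < D →
      (∀ x : ℝ, perfectProb k τ x = D * x ^ (∑ i, τ i - k) * (1 - x) ^ (k ^ 2 - ∑ i, τ i)) →
      ∀ x : ℝ, 0 ≤ x → x ≤ 1 → |perfectProb k τ x| ≤ D := by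
    intro τ D hD hrepτ x hx0 hx1
    have h1x : (0:ℝ) ≤ 1 - x := by linarith
    rw [hrepτ, abs_of_nonneg (mul_nonneg (mul_nonneg hD.le (pow_nonneg hx0 _))
      (pow_nonneg h1x _))]
    calc D * x ^ (∑ i, τ i - k) * (1 - x) ^ (k ^ 2 - ∑ i, τ i)
        ≤ D * 1 * 1 := by
          apply mul_le_mul (mul_le_mul le_rfl (pow_le_one₀ hx0 hx1) (pow_nonneg hx0 _) hD.le)
            (pow_le_one₀ h1x (by linarith)) (pow_nonneg h1x _)
            (by positivity)
      _ = D := by ring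
  -- measurability of g
  have hPmeas : ∀ (τ : Fin k → ℕ), Measurable (perfectProb k τ) := by
    intro τ
    unfold perfectProb
    exact ((measurable_const.mul (measurable_id.pow_const (γ := ℕ) _))).mul
      ((measurable_const.sub measurable_id).pow_const (γ := ℕ) _)
  have hgmeas : Measurable fun p : ℝ × ℝ => g p.1 p.2 := by
    apply hfmeas.mul
    exact (((hPmeas σ).comp measurable_fst).mul ((hPmeas σ').comp measurable_snd)).sub
      (((hPmeas σ').comp measurable_fst).mul ((hPmeas σ).comp measurable_snd))
  -- integrability on T
  have hTfin : volume T ≠ ⊤ := by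
    have hsub : T ⊆ Set.Ioo (0:ℝ) 1 ×ˢ Set.Ioo (0:ℝ) 1 := by
      rintro ⟨x, y⟩ ⟨h1, h2, h3⟩
      exact ⟨⟨h1, h2.trans h3⟩, ⟨h1.trans h2, h3⟩⟩
    have : volume (Set.Ioo (0:ℝ) 1 ×ˢ Set.Ioo (0:ℝ) 1) = 1 := by
      rw [MeasureTheory.Measure.volume_eq_prod, MeasureTheory.Measure.prod_prod]
      simp
    exact ne_top_of_le_ne_top (by rw [this]; exact ENNReal.one_ne_top) (measure_mono hsub)
  have hgnonnegT : ∀ p ∈ T, 0 ≤ g p.1 p.2 := by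
    rintro ⟨x, y⟩ ⟨h1, h2, h3⟩
    exact mul_nonneg (hf01 x y).1 (key x y h1 h2 h3).le
  have hIntOn : IntegrableOn (fun p : ℝ × ℝ => g p.1 p.2) T volume := by
    apply Measure.integrableOn_of_bounded (M := 2 * (C * C')) hTfin
      hgmeas.aestronglyMeasurable
    apply (ae_restrict_iff' hTmeas).2
    apply ae_of_all
    rintro ⟨x, y⟩ ⟨h1, h2, h3⟩
    have hx01 : 0 ≤ x ∧ x ≤ 1 := ⟨h1.le, (h2.trans h3).le⟩
    have hy01 : 0 ≤ y ∧ y ≤ 1 := ⟨(h1.trans h2).le, h3.le⟩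
    have bσx := bound σ C hC hrep x hx01.1 hx01.2
    have bσy := bound σ C hC hrep y hy01.1 hy01.2
    have bσ'x := bound σ' C' hC' hrep' x hx01.1 hx01.2
    have bσ'y := bound σ' C' hC' hrep' y hy01.1 hy01.2
    have hf1 : |f x y| ≤ 1 := abs_le.2 ⟨by linarith [(hf01 x y).1], (hf01 x y).2⟩
    calc ‖g x y‖ = |f x y| * |perfectProb k σ x * perfectProb k σ' y -
          perfectProb k σ' x * perfectProb k σ y| := by
          rw [hg_def]; exact abs_mul _ _
      _ ≤ 1 * (|perfectProb k σ x * perfectProb k σ' y| +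
            |perfectProb k σ' x * perfectProb k σ y|) :=
          mul_le_mul hf1 (abs_sub _ _) (abs_nonneg _) zero_le_one
      _ ≤ 1 * (C * C' + C' * C) := by
          rw [abs_mul, abs_mul]
          have h1 : |perfectProb k σ x| * |perfectProb k σ' y| ≤ C * C' :=
            mul_le_mul bσx bσ'y (abs_nonneg _) hC.le
          have h2 : |perfectProb k σ' x| * |perfectProb k σ y| ≤ C' * C :=
            mul_le_mul bσ'x bσy (abs_nonneg _) hC'.le
          linarith
      _ = 2 * (C * C') := by ring
  -- the indicator function
  set G : ℝ × ℝ → ℝ := T.indicator (fun p => g p.1 p.2) with hG_def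
  have hGint : Integrable G volume := (integrable_indicator_iff hTmeas).2 hIntOn
  -- step 1 : inner integrals agree on (0,1)
  have step1 : ∀ x ∈ Set.Ioo (0:ℝ) 1, (∫ y in x..1, g x y) = ∫ y, G (x, y) := by
    intro x hx
    have hsec : (fun y => G (x, y)) = (Set.Ioo x 1).indicator (g x) := by
      funext y
      by_cases hy : y ∈ Set.Ioo x 1
      · rw [Set.indicator_of_mem hy, hG_def,
          Set.indicator_of_mem (show (x, y) ∈ T from ⟨hx.1, hy.1, hy.2⟩)]
      · rw [Set.indicator_of_notMem hy, hG_def, Set.indicator_of_notMem]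
        rintro ⟨_, h2, h3⟩; exact hy ⟨h2, h3⟩
    rw [hsec, MeasureTheory.integral_indicator measurableSet_Ioo,
      intervalIntegral.integral_of_le hx.2.le, integral_Ioc_eq_integral_Ioo]
  -- step 2 : outer integral
  have step2 : (∫ x in (0:ℝ)..1, ∫ y in x..1, g x y) = ∫ p in T, g p.1 p.2 := by
    rw [intervalIntegral.integral_of_le zero_le_one, integral_Ioc_eq_integral_Ioo,
      setIntegral_congr_fun measurableSet_Ioo step1]
    have hzero : ∀ x, x ∉ Set.Ioo (0:ℝ) 1 → (∫ y, G (x, y)) = 0 := by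
      intro x hx
      have : (fun y => G (x, y)) = fun _ => (0:ℝ) := by
        funext y
        rw [hG_def, Set.indicator_of_notMem]
        rintro ⟨h1, h2, h3⟩
        exact hx ⟨h1, h2.trans h3⟩
      rw [this, MeasureTheory.integral_zero]
    rw [setIntegral_eq_integral_of_forall_compl_eq_zero hzero]
    have hGint' : Integrable (Function.uncurry fun x y => G (x, y)) (volume.prod volume) := by
      rw [← MeasureTheory.Measure.volume_eq_prod]
      exact hGint
    rw [MeasureTheory.integral_integral hGint', ← MeasureTheory.Measure.volume_eq_prod]
    simp only [hG_def]
    exact MeasureTheory.integral_indicator hTmeas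
  rw [show (∫ x in (0:ℝ)..1, ∫ y in x..1,
        f x y * (perfectProb k σ x * perfectProb k σ' y -
          perfectProb k σ' x * perfectProb k σ y)) =
      ∫ x in (0:ℝ)..1, ∫ y in x..1, g x y from rfl, step2]
  -- final positivity
  rw [setIntegral_pos_iff_support_of_nonneg_ae
    ((ae_restrict_iff' hTmeas).2 (ae_of_all _ hgnonnegT)) hIntOn]
  refine lt_of_lt_of_le hfpos (measure_mono ?_)
  rintro ⟨x, y⟩ ⟨h1, h2, h3, h4⟩
  refine ⟨?_, h1, h2, h3⟩
  exact ne_of_gt (mul_pos h4 (key x y h1 h2 h3))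
end

section
/- Let the weights be W(σ,σ') for a complete directed graph over the finite set of types, and define C(≻) = Σ_{σ≻σ'} W(σ,σ') + (1/2) Σ_σ W(σ,σ) for each strict total order ≻ on the types. If there is a function B on types such that for all σ ≠ σ', sign(W(σ,σ') − W(σ',σ)) = sign(B(σ) − B(σ')), then every strict total order ≻ that refines the non-increasing order of B (i.e., B(σ) > B(σ') implies σ ≻ σ') maximizes C(≻) over all strict total orders. -/
/-- Abstract optimality of Borda orderings: if the pairwise weight comparisons
agree in sign with the comparisons of a score function `B`, then any strict
total order refining the non-increasing order of `B` maximizes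
`C(≻) = Σ_{σ≻σ'} W(σ,σ') + (1/2)Σ_σ W(σ,σ)` over all strict total orders. -/
theorem stmt_9 {Types : Type*} [Fintype Types]
    (W : Types → Types → ℝ) (B : Types → ℝ)
    (hsign : ∀ σ σ', σ ≠ σ' → Real.sign (W σ σ' - W σ' σ) = Real.sign (B σ - B σ'))
    (r : Types → Types → Prop) [DecidableRel r] (hr : IsStrictTotalOrder Types r)
    (hrefine : ∀ σ σ', B σ' < B σ → r σ σ') :
    ∀ (r' : Types → Types → Prop) [DecidableRel r'], IsStrictTotalOrder Types r' →
      (∑ p ∈ Finset.univ.filter fun p : Types × Types => r' p.1 p.2, W p.1 p.2) +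
          (1 / 2) * ∑ σ, W σ σ ≤
        (∑ p ∈ Finset.univ.filter fun p : Types × Types => r p.1 p.2, W p.1 p.2) +
          (1 / 2) * ∑ σ, W σ σ := by
  intro r' _ hr'
  have key : ∀ σ σ', σ ≠ σ' → r σ σ' → W σ' σ ≤ W σ σ' := by
    intro σ σ' hne hrs
    rcases lt_trichotomy (B σ') (B σ) with h | h | h
    · have hs := hsign σ σ' hne
      rw [Real.sign_of_pos (sub_pos.mpr h)] at hs
      rcases lt_trichotomy (W σ σ' - W σ' σ) 0 with hw | hw | hw
      · rw [Real.sign_of_neg hw] at hs; norm_num at hs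
      · linarith
      · linarith
    · have hs := hsign σ σ' hne
      rw [h, sub_self, Real.sign_zero, Real.sign_eq_zero_iff] at hs
      linarith
    · exact absurd hrs (fun hc => hr.irrefl σ (hr.trans _ _ _ hc (hrefine σ' σ h)))
  have asr : ∀ a b, r a b → ¬ r b a := fun a b h1 h2 => hr.irrefl a (hr.trans _ _ _ h1 h2)
  have asr' : ∀ a b, r' a b → ¬ r' b a := fun a b h1 h2 => hr'.irrefl a (hr'.trans _ _ _ h1 h2)
  -- reduce to the sums over pairs
  have h1 := Finset.sum_filter_add_sum_filter_not
    (Finset.univ.filter fun p : Types × Types => r p.1 p.2)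
    (fun p => r' p.1 p.2) (fun p => W p.1 p.2)
  have h2 := Finset.sum_filter_add_sum_filter_not
    (Finset.univ.filter fun p : Types × Types => r' p.1 p.2)
    (fun p => r p.1 p.2) (fun p => W p.1 p.2)
  simp only [Finset.filter_filter] at h1 h2
  have hcomm : (Finset.univ.filter fun p : Types × Types => r' p.1 p.2 ∧ r p.1 p.2)
      = Finset.univ.filter fun p : Types × Types => r p.1 p.2 ∧ r' p.1 p.2 := by
    apply Finset.filter_congr; intro p _; simp [and_comm]
  rw [hcomm] at h2
  have hswap : (∑ p ∈ Finset.univ.filter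
        (fun p : Types × Types => r' p.1 p.2 ∧ ¬ r p.1 p.2), W p.1 p.2)
      = ∑ p ∈ Finset.univ.filter
        (fun p : Types × Types => r p.1 p.2 ∧ ¬ r' p.1 p.2), W p.2 p.1 := by
    apply Finset.sum_nbij' (fun p => Prod.swap p) (fun p => Prod.swap p)
    · intro p hp
      simp only [Finset.mem_filter, Finset.mem_univ, true_and, Prod.fst_swap,
        Prod.snd_swap] at hp ⊢
      obtain ⟨h1', h2'⟩ := hp
      have hne : p.1 ≠ p.2 := fun h => hr'.irrefl p.1 (h ▸ h1')
      rcases (haveI := hr; trichotomous_of r p.2 p.1) with h | h | h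
      · exact ⟨h, fun hc => asr' _ _ h1' hc⟩
      · exact absurd h.symm hne
      · exact absurd h h2'
    · intro p hp
      simp only [Finset.mem_filter, Finset.mem_univ, true_and, Prod.fst_swap,
        Prod.snd_swap] at hp ⊢
      obtain ⟨h1', h2'⟩ := hp
      have hne : p.1 ≠ p.2 := fun h => hr.irrefl p.1 (h ▸ h1')
      rcases (haveI := hr'; trichotomous_of r' p.2 p.1) with h | h | h
      · exact ⟨h, fun hc => asr _ _ h1' hc⟩
      · exact absurd h.symm hne
      · exact absurd h h2'
    · intro p _; simp
    · intro p _; simp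
    · intro p _; simp
  have hle : ∑ p ∈ Finset.univ.filter
        (fun p : Types × Types => r p.1 p.2 ∧ ¬ r' p.1 p.2), W p.2 p.1
      ≤ ∑ p ∈ Finset.univ.filter
        (fun p : Types × Types => r p.1 p.2 ∧ ¬ r' p.1 p.2), W p.1 p.2 := by
    apply Finset.sum_le_sum
    intro p hp
    simp only [Finset.mem_filter, Finset.mem_univ, true_and] at hp
    have hne : p.1 ≠ p.2 := fun h => hr.irrefl p.1 (h ▸ hp.1)
    exact key p.1 p.2 hne hp.1
  have := hswap ▸ h2
  linarith [h1, h2, hswap]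
end
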